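/- arXiv:1007.1955 — 3 statements merged into one kernel-verified Lean document; each statement's English description precedes it below -/
import Mathlib

section
/- Define c_{α,β} = Σ_{k=1}^{β} (-1)^{β-k} · [α+k, k] · C(α+β, β-k), where [n,k] is the unsigned Stirling number of the first kind. Then for α ≥ 1 and β ≥ 1, c_{α,β} = (α + β - 1) · (c_{α-1,β} + c_{α-1,β-1}). -/
/-- Unsigned Stirling numbers of the first kind. -/
def stirlingFirst : ℕ → ℕ → ℕ
  | 0, 0 => 1
  | 0, _ + 1 => 0
  | _ + 1, 0 => 0
  | n + 1, k + 1 => n * stirlingFirst n (k + 1) + stirlingFirst n k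

/-- The coefficients `c_{α,β}` from the paper. -/
def cCoeff (α β : ℕ) : ℤ :=
  ∑ k ∈ Finset.Icc 1 β,
    (-1 : ℤ) ^ (β - k) * stirlingFirst (α + k) k * (α + β).choose (β - k)

lemma st_succ_succ (n k : ℕ) : stirlingFirst (n+1) (k+1) = n * stirlingFirst n (k+1) + stirlingFirst n k := rfl

lemma st_zero (n : ℕ) : stirlingFirst (n+1) 0 = 0 := rfl

/-- Generalized sum with an independent binomial top `t`. -/
noncomputable def D (a b t : ℕ) : ℤ :=
  ∑ j ∈ Finset.range b, (-1 : ℤ) ^ j * (stirlingFirst (a + (b - j)) (b - j) : ℤ) * (t.choose j : ℤ)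

lemma DF1 (a b t : ℕ) : D a (b+1) (t+1) = D a (b+1) t - D a b t := by
  unfold D
  rw [Finset.sum_range_succ' _ b, Finset.sum_range_succ' (fun j => (-1 : ℤ) ^ j * (stirlingFirst (a + (b + 1 - j)) (b + 1 - j) : ℤ) * ((t).choose j : ℤ)) b]
  simp only [Nat.succ_sub_succ_eq_sub, Nat.sub_zero, Nat.choose_zero_right, pow_zero, one_mul, Nat.cast_one, mul_one, Nat.choose_succ_succ]
  rw [Finset.sum_congr rfl (fun i _ => by push_cast; ring :
    ∀ i ∈ Finset.range b, (-1 : ℤ) ^ (i+1) * (stirlingFirst (a + (b - i)) (b - i) : ℤ) * ((t.choose i + t.choose (i+1) : ℕ) : ℤ)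
      = (-1 : ℤ) ^ (i+1) * (stirlingFirst (a + (b - i)) (b - i) : ℤ) * (t.choose (i+1) : ℤ)
        - (-1 : ℤ) ^ i * (stirlingFirst (a + (b - i)) (b - i) : ℤ) * (t.choose i : ℤ)), Finset.sum_sub_distrib]
  ring

lemma DF2 (a b t : ℕ) : D (a+1) (b+1) (t+1)
    = ((a : ℤ) + b + 1) * D a (b+1) (t+1) + ((t : ℤ) + 1) * D a b t + D (a+1) b (t+1) := by
  have key : ∀ j ∈ Finset.range (b+1),
      (-1 : ℤ) ^ j * (stirlingFirst (a + 1 + (b + 1 - j)) (b + 1 - j) : ℤ) * ((t+1).choose j : ℤ)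
        = ((a : ℤ) + b + 1) * ((-1 : ℤ) ^ j * (stirlingFirst (a + (b + 1 - j)) (b + 1 - j) : ℤ) * ((t+1).choose j : ℤ))
          - ((-1 : ℤ) ^ j * (j : ℤ) * (stirlingFirst (a + (b + 1 - j)) (b + 1 - j) : ℤ) * ((t+1).choose j : ℤ))
          + (-1 : ℤ) ^ j * (stirlingFirst (a + 1 + (b - j)) (b - j) : ℤ) * ((t+1).choose j : ℤ) := by
    intro j hj
    have hjb : j ≤ b := by simpa [Nat.lt_succ_iff] using hj
    have h1 : b + 1 - j = (b - j) + 1 := by omega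
    have h4 : a + 1 + (b - j) = (a + (b - j)) + 1 := by omega
    rw [h1]
    rw [show a + 1 + (b - j + 1) = (a + (b - j) + 1) + 1 from by omega,
        show a + (b - j + 1) = a + (b - j) + 1 from by omega, h4, st_succ_succ]
    have hc : ((b - j : ℕ) : ℤ) = (b : ℤ) - j := by
      rw [Nat.cast_sub hjb]
    push_cast [hc]
    ring
  rw [show D (a+1) (b+1) (t+1) = ∑ j ∈ Finset.range (b+1),
      (-1 : ℤ) ^ j * (stirlingFirst (a + 1 + (b + 1 - j)) (b + 1 - j) : ℤ) * ((t+1).choose j : ℤ) from rfl,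
    Finset.sum_congr rfl key]
  rw [Finset.sum_add_distrib, Finset.sum_sub_distrib, ← Finset.mul_sum]
  have hP : ∑ j ∈ Finset.range (b+1),
      (-1 : ℤ) ^ j * (stirlingFirst (a + 1 + (b - j)) (b - j) : ℤ) * ((t+1).choose j : ℤ)
      = D (a+1) b (t+1) := by
    rw [Finset.sum_range_succ]
    simp [D, st_zero]
  have hJ : ∑ j ∈ Finset.range (b+1),
      (-1 : ℤ) ^ j * (j : ℤ) * (stirlingFirst (a + (b + 1 - j)) (b + 1 - j) : ℤ) * ((t+1).choose j : ℤ)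
      = -(((t : ℤ) + 1) * D a b t) := by
    rw [Finset.sum_range_succ' _ b]
    simp only [Nat.succ_sub_succ_eq_sub, Nat.cast_zero, mul_zero, zero_mul, add_zero, Nat.cast_add, Nat.cast_one]
    have term : ∀ i ∈ Finset.range b,
        (-1 : ℤ) ^ (i+1) * ((i : ℤ) + 1) * (stirlingFirst (a + (b - i)) (b - i) : ℤ) * ((t+1).choose (i+1) : ℤ)
        = -(((t : ℤ) + 1) * ((-1 : ℤ) ^ i * (stirlingFirst (a + (b - i)) (b - i) : ℤ) * (t.choose i : ℤ))) := by
      intro i _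
      have h := Nat.add_one_mul_choose_eq t i
      have h' : ((t+1) * t.choose i : ℤ) = ((t+1).choose (i+1) * (i+1) : ℤ) := by
        exact_mod_cast congrArg (Nat.cast : ℕ → ℤ) h
      push_cast at h' ⊢
      linear_combination ((-1 : ℤ) ^ i * (stirlingFirst (a + (b - i)) (b - i) : ℤ)) * h'
    rw [Finset.sum_congr rfl term]
    rw [Finset.sum_neg_distrib, ← Finset.mul_sum]
    rfl
  rw [hP, hJ]
  have hM : D a (b+1) (t+1) = ∑ j ∈ Finset.range (b+1),
      (-1 : ℤ) ^ j * (stirlingFirst (a + (b + 1 - j)) (b + 1 - j) : ℤ) * ((t+1).choose j : ℤ) := rfl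
  rw [← hM]
  ring

lemma DQ (a s : ℕ) : ∀ b : ℕ, D (a+1) b (s+2)
    = ((a : ℤ) + b) * D a b (s+1) + ((s : ℤ) + 1) * (D a b s - D a b (s+1))
  | 0 => by simp [D]
  | (b+1) => by
    have ih := DQ a s b
    have f2 := DF2 a b (s+1)
    have f1a := DF1 a b (s+1)
    have f1b := DF1 a b s
    push_cast at f2 ⊢
    linear_combination f2 + ((a : ℤ) + b + 1) * f1a + ih + ((s : ℤ) + 1) * f1b

lemma cEq (α β : ℕ) : cCoeff α β = D α β (α + β) := by
  unfold cCoeff D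
  refine Finset.sum_nbij' (fun k => β - k) (fun j => β - j) ?_ ?_ ?_ ?_ ?_
  · intro k hk
    simp only [Finset.mem_Icc] at hk
    simp only [Finset.mem_range]
    omega
  · intro j hj
    simp only [Finset.mem_range] at hj
    simp only [Finset.mem_Icc]
    omega
  · intro k hk
    simp only [Finset.mem_Icc] at hk
    show β - (β - k) = k
    omega
  · intro j hj
    simp only [Finset.mem_range] at hj
    show β - (β - j) = j
    omega
  · intro k hk
    simp only [Finset.mem_Icc] at hk
    have hk2 : β - (β - k) = k := by omega
    show _ = (-1 : ℤ) ^ (β - k) * (stirlingFirst (α + (β - (β - k))) (β - (β - k)) : ℤ) * ((α + β).choose (β - k) : ℤ)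
    rw [hk2]

theorem stmt_3 (α β : ℕ) (hα : 1 ≤ α) (hβ : 1 ≤ β) :
    cCoeff α β = ((α : ℤ) + β - 1) * (cCoeff (α - 1) β + cCoeff (α - 1) (β - 1)) := by
  obtain ⟨a, rfl⟩ : ∃ a, α = a + 1 := ⟨α - 1, by omega⟩
  obtain ⟨c, rfl⟩ : ∃ c, β = c + 1 := ⟨β - 1, by omega⟩
  simp only [Nat.add_sub_cancel]
  have h1 : cCoeff (a+1) (c+1) = D (a+1) (c+1) ((a+c)+2) := by
    rw [cEq]; congr 1; try omega
  have h2 : cCoeff a (c+1) = D a (c+1) ((a+c)+1) := by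
    rw [cEq]; congr 1; try omega
  have h3 : cCoeff a c = D a c (a+c) := cEq a c
  have hq := DQ a (a+c) (c+1)
  have hf := DF1 a c (a+c)
  rw [h1, h2, h3]
  push_cast at hq ⊢
  linear_combination hq - ((a : ℤ) + c + 1) * hf
end

section
/- Define c_{α,β} = Σ_{k=1}^{β} (-1)^{β-k} · [α+k, k] · C(α+β, β-k). Then for α ≥ 1, β ≥ 1, c_{α,β} = (α+β-1) · Σ_{k=1}^{β} (-1)^{β-k} · [α+k-1, k] · C(α+β-2, β-k). -/
lemma sf_succ_zero (n : ℕ) : stirlingFirst (n + 1) 0 = 0 := rfl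

lemma sf_rec (n k : ℕ) :
    stirlingFirst (n + 1) (k + 1) = n * stirlingFirst n (k + 1) + stirlingFirst n k := rfl

/-- Auxiliary sum, reindexed. -/
def auxG (a b N : ℕ) : ℤ :=
  ∑ j ∈ Finset.range b, (-1 : ℤ) ^ j * stirlingFirst (a + b - j) (b - j) * N.choose j

lemma auxG_zero (a N : ℕ) : auxG a 0 N = 0 := by simp [auxG]

lemma auxG_one (a N : ℕ) : auxG a 1 N = stirlingFirst (a + 1) 1 := by
  simp [auxG]

/-- Pascal recurrence in N. -/
lemma R2 (a b N : ℕ) : auxG a (b + 1) (N + 1) = auxG a (b + 1) N - auxG a b N := by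
  have h1 : auxG a (b + 1) (N + 1) =
      (∑ i ∈ Finset.range b, (-1 : ℤ) ^ (i + 1) * stirlingFirst (a + b - i) (b - i) *
        ((N.choose i : ℤ) + N.choose (i + 1))) + stirlingFirst (a + b + 1) (b + 1) := by
    unfold auxG
    rw [Finset.sum_range_succ']
    congr 1
    · refine Finset.sum_congr rfl fun i hi => ?_
      have e1 : a + (b + 1) - (i + 1) = a + b - i := by omega
      have e2 : b + 1 - (i + 1) = b - i := by omega
      rw [e1, e2, Nat.choose_succ_succ]
      push_cast
      ring
    · simp [Nat.add_assoc]
  have h2 : auxG a (b + 1) N =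
      (∑ i ∈ Finset.range b, (-1 : ℤ) ^ (i + 1) * stirlingFirst (a + b - i) (b - i) *
        (N.choose (i + 1) : ℤ)) + stirlingFirst (a + b + 1) (b + 1) := by
    unfold auxG
    rw [Finset.sum_range_succ']
    congr 1
    · refine Finset.sum_congr rfl fun i hi => ?_
      have e1 : a + (b + 1) - (i + 1) = a + b - i := by omega
      have e2 : b + 1 - (i + 1) = b - i := by omega
      rw [e1, e2]
    · simp [Nat.add_assoc]
  have h3 : auxG a b N =
      ∑ i ∈ Finset.range b, (-1 : ℤ) ^ i * stirlingFirst (a + b - i) (b - i) * N.choose i := rfl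
  rw [h1, h2, h3]
  have key : ∀ i ∈ Finset.range b,
      (-1 : ℤ) ^ (i + 1) * stirlingFirst (a + b - i) (b - i) *
        ((N.choose i : ℤ) + N.choose (i + 1)) =
      (-1 : ℤ) ^ (i + 1) * stirlingFirst (a + b - i) (b - i) * (N.choose (i + 1) : ℤ) -
      (-1 : ℤ) ^ i * stirlingFirst (a + b - i) (b - i) * N.choose i := by
    intro i hi
    ring
  rw [Finset.sum_congr rfl key, Finset.sum_sub_distrib]
  ring

/-- Stirling recurrence in a. -/
lemma R1 (a b N : ℕ) : auxG (a + 1) (b + 1) (N + 1) =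
    ((a : ℤ) + b + 1) * auxG a (b + 1) (N + 1) + ((N : ℤ) + 1) * auxG a b N +
      auxG (a + 1) b (N + 1) := by
  have key : ∀ j ∈ Finset.range (b + 1),
      (-1 : ℤ) ^ j * stirlingFirst (a + 1 + (b + 1) - j) (b + 1 - j) * ((N + 1).choose j : ℤ) =
        ((a : ℤ) + b + 1) *
            ((-1 : ℤ) ^ j * stirlingFirst (a + (b + 1) - j) (b + 1 - j) * ((N + 1).choose j : ℤ))
          - (j : ℤ) * ((-1 : ℤ) ^ j * stirlingFirst (a + (b + 1) - j) (b + 1 - j) *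
              ((N + 1).choose j : ℤ))
          + (-1 : ℤ) ^ j * stirlingFirst (a + 1 + b - j) (b - j) * ((N + 1).choose j : ℤ) := by
    intro j hj
    have hjb : j ≤ b := by simpa [Nat.lt_succ_iff] using hj
    obtain ⟨m, rfl⟩ : ∃ m, b = j + m := ⟨b - j, by omega⟩
    have e1 : a + 1 + (j + m + 1) - j = (a + m + 1) + 1 := by omega
    have e2 : j + m + 1 - j = m + 1 := by omega
    have e3 : a + (j + m + 1) - j = a + m + 1 := by omega
    have e4 : a + 1 + (j + m) - j = a + m + 1 := by omega
    have e5 : j + m - j = m := by omega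
    rw [e1, e2, e3, e4, e5, sf_rec]
    push_cast
    ring
  have hL : auxG (a + 1) (b + 1) (N + 1) =
      ∑ j ∈ Finset.range (b + 1),
        (-1 : ℤ) ^ j * stirlingFirst (a + 1 + (b + 1) - j) (b + 1 - j) * ((N + 1).choose j : ℤ) :=
    rfl
  rw [hL, Finset.sum_congr rfl key, Finset.sum_add_distrib, Finset.sum_sub_distrib,
    ← Finset.mul_sum]
  have hA : (∑ j ∈ Finset.range (b + 1),
      (-1 : ℤ) ^ j * stirlingFirst (a + (b + 1) - j) (b + 1 - j) * ((N + 1).choose j : ℤ)) =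
      auxG a (b + 1) (N + 1) := rfl
  have hJ : (∑ j ∈ Finset.range (b + 1),
      (j : ℤ) * ((-1 : ℤ) ^ j * stirlingFirst (a + (b + 1) - j) (b + 1 - j) *
        ((N + 1).choose j : ℤ))) = -(((N : ℤ) + 1) * auxG a b N) := by
    rw [Finset.sum_range_succ']
    have step : ∀ i ∈ Finset.range b,
        ((i + 1 : ℕ) : ℤ) * ((-1 : ℤ) ^ (i + 1) * stirlingFirst (a + (b + 1) - (i + 1))
          (b + 1 - (i + 1)) * ((N + 1).choose (i + 1) : ℤ)) =
        -(((N : ℤ) + 1) * ((-1 : ℤ) ^ i * stirlingFirst (a + b - i) (b - i) * (N.choose i : ℤ))) := by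
      intro i hi
      have e1 : a + (b + 1) - (i + 1) = a + b - i := by omega
      have e2 : b + 1 - (i + 1) = b - i := by omega
      have hc : ((N : ℤ) + 1) * (N.choose i : ℤ) = ((N + 1).choose (i + 1) : ℤ) * ((i : ℤ) + 1) := by
        exact_mod_cast congrArg (Nat.cast : ℕ → ℤ) (Nat.add_one_mul_choose_eq N i)
      rw [e1, e2]
      push_cast
      calc ((i : ℤ) + 1) * ((-1 : ℤ) ^ (i + 1) * stirlingFirst (a + b - i) (b - i) *
              ((N + 1).choose (i + 1) : ℤ))
          = (((N + 1).choose (i + 1) : ℤ) * ((i : ℤ) + 1)) *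
              ((-1 : ℤ) ^ (i + 1) * stirlingFirst (a + b - i) (b - i)) := by ring
        _ = (((N : ℤ) + 1) * (N.choose i : ℤ)) *
              ((-1 : ℤ) ^ (i + 1) * stirlingFirst (a + b - i) (b - i)) := by rw [← hc]
        _ = -(((N : ℤ) + 1) * ((-1 : ℤ) ^ i * stirlingFirst (a + b - i) (b - i) *
              (N.choose i : ℤ))) := by ring
    rw [Finset.sum_congr rfl step]
    simp [← Finset.mul_sum, auxG, Finset.sum_neg_distrib]
  have hB : (∑ j ∈ Finset.range (b + 1),
      (-1 : ℤ) ^ j * stirlingFirst (a + 1 + b - j) (b - j) * ((N + 1).choose j : ℤ)) =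
      auxG (a + 1) b (N + 1) := by
    rw [Finset.sum_range_succ]
    have : stirlingFirst (a + 1 + b - b) (b - b) = stirlingFirst (a + 1) 0 := by
      congr 1 <;> omega
    rw [this, sf_succ_zero]
    simp [auxG]
  rw [hA, hJ, hB]
  ring

lemma star (a N : ℕ) : ∀ b : ℕ, auxG (a + 1) (b + 1) (N + 2) =
    ((a : ℤ) + b + 1) * auxG a (b + 1) N + ((N : ℤ) - a - b) * auxG a b N := by
  intro b
  induction b with
  | zero =>
    rw [auxG_one, auxG_one, auxG_zero]
    have : stirlingFirst (a + 1 + 1) 1 = (a + 1) * stirlingFirst (a + 1) 1 + stirlingFirst (a + 1) 0 :=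
      sf_rec (a + 1) 0
    rw [this, sf_succ_zero]
    push_cast
    ring
  | succ b ih =>
    have h1 := R1 a (b + 1) (N + 1)
    have h2 := R2 a (b + 1) (N + 1)
    have h3 := R2 a (b + 1) N
    have h4 := R2 a b N
    rw [show N + 1 + 1 = N + 2 from rfl] at h1 h2
    rw [h2, h3, h4, ih] at h1
    rw [h1]
    push_cast
    ring

lemma Icc_eq_auxG (a b N : ℕ) :
    (∑ k ∈ Finset.Icc 1 b, (-1 : ℤ) ^ (b - k) * stirlingFirst (a + k) k * (N.choose (b - k))) =
      auxG a b N := by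
  rw [show Finset.Icc 1 b = Finset.Ico 1 (b + 1) from (Finset.Ico_add_one_right_eq_Icc 1 b).symm,
    Finset.sum_Ico_eq_sum_range]
  simp only [Nat.add_sub_cancel]
  unfold auxG
  rw [← Finset.sum_range_reflect]
  refine Finset.sum_congr rfl fun i hi => ?_
  have hib : i < b := Finset.mem_range.mp hi
  rw [show 1 + (b - 1 - i) = b - i from by omega, show b - (b - i) = i from by omega,
    show a + (b - i) = a + b - i from by omega]

theorem stmt_4 (α β : ℕ) (hα : 1 ≤ α) (hβ : 1 ≤ β) :
    cCoeff α β = ((α : ℤ) + β - 1) *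
      ∑ k ∈ Finset.Icc 1 β,
        (-1 : ℤ) ^ (β - k) * stirlingFirst (α + k - 1) k * (α + β - 2).choose (β - k) := by
  obtain ⟨a, rfl⟩ : ∃ a, α = a + 1 := ⟨α - 1, by omega⟩
  obtain ⟨b, rfl⟩ : ∃ b, β = b + 1 := ⟨β - 1, by omega⟩
  have hL : cCoeff (a + 1) (b + 1) = auxG (a + 1) (b + 1) ((a + b) + 2) := by
    unfold cCoeff
    rw [show (a + b) + 2 = a + 1 + (b + 1) from by omega, ← Icc_eq_auxG (a + 1) (b + 1) (a + 1 + (b + 1))]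
  have hR : (∑ k ∈ Finset.Icc 1 (b + 1),
      (-1 : ℤ) ^ (b + 1 - k) * stirlingFirst (a + 1 + k - 1) k *
        ((a + 1 + (b + 1) - 2).choose (b + 1 - k))) = auxG a (b + 1) (a + b) := by
    rw [← Icc_eq_auxG a (b + 1) (a + b)]
    refine Finset.sum_congr rfl fun k hk => ?_
    rw [show a + 1 + k - 1 = a + k from by omega, show a + 1 + (b + 1) - 2 = a + b from by omega]
  rw [hL, hR, star a (a + b) b]
  push_cast
  ring
end

section
/- For complex s with Re(s) > 0 and nonnegative integer n, ∫_0^∞ t^{s-1}/(1+e^t) dt = ((-1)^{n+1}/(s(s+1)···(s+n))) · ∫_0^∞ t^{s+n} · (d/dt)^{n+1}[1/(1+e^t)] dt. -/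
open MeasureTheory Set Filter Polynomial

noncomputable def fS : ℝ → ℂ := fun u : ℝ => 1 / (1 + (Real.exp u : ℂ))

lemma fS_ne (u : ℝ) : (1 : ℂ) + (Real.exp u : ℂ) ≠ 0 := by
  have h : ((1 + Real.exp u : ℝ) : ℂ) = 1 + (Real.exp u : ℂ) := by push_cast; ring
  rw [← h]
  exact_mod_cast (by positivity : (1 + Real.exp u : ℝ) ≠ 0)

lemma fS_eq_inv : fS = fun y : ℝ => (1 + (Real.exp y : ℂ))⁻¹ := by
  funext y; simp [fS, one_div]

lemma fS_norm (u : ℝ) : ‖fS u‖ = 1 / (1 + Real.exp u) := by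
  have h : fS u = ((1 / (1 + Real.exp u) : ℝ) : ℂ) := by
    simp only [fS]; push_cast; ring
  rw [h, Complex.norm_real, Real.norm_eq_abs, abs_of_pos (by positivity)]

lemma fS_le_one (u : ℝ) : ‖fS u‖ ≤ 1 := by
  rw [fS_norm, div_le_one (by positivity)]
  have := Real.exp_pos u
  linarith

lemma fS_le_exp (u : ℝ) : ‖fS u‖ ≤ Real.exp (-u) := by
  rw [fS_norm, Real.exp_neg, ← one_div]
  apply one_div_le_one_div_of_le (Real.exp_pos u)
  linarith

lemma fS_contDiff : ContDiff ℝ (⊤ : ℕ∞) fS := by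
  have h1 : ContDiff ℝ (⊤ : ℕ∞) (fun u : ℝ => 1 + (Real.exp u : ℂ)) :=
    contDiff_const.add (Complex.ofRealCLM.contDiff.comp Real.contDiff_exp)
  rw [fS_eq_inv]
  exact h1.inv fS_ne

lemma fS_hasDeriv (u : ℝ) : HasDerivAt fS (fS u ^ 2 - fS u) u := by
  have h1 : HasDerivAt (fun y : ℝ => 1 + (Real.exp y : ℂ)) ((Real.exp u : ℂ)) u :=
    (HasDerivAt.ofReal_comp (Real.hasDerivAt_exp u)).const_add 1
  have h2 := (hasDerivAt_const u (1 : ℂ)).div h1 (fS_ne u)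
  have h3 : fS u ^ 2 - fS u =
      ((0 : ℂ) * (1 + (Real.exp u : ℂ)) - 1 * (Real.exp u : ℂ)) / (1 + (Real.exp u : ℂ)) ^ 2 := by
    have d := fS_ne u
    set e := (Real.exp u : ℂ) with he
    simp only [fS, ← he]
    field_simp
    ring
  rw [h3]
  exact h2

lemma fS_poly (k : ℕ) : ∃ Q : Polynomial ℂ, ∀ t : ℝ,
    iteratedDeriv k fS t = fS t * Q.eval (fS t) := by
  induction k with
  | zero => exact ⟨1, fun t => by simp⟩
  | succ k ih =>
    obtain ⟨Q, hQ⟩ := ih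
    refine ⟨(X - C 1) * (Q + X * derivative Q), fun t => ?_⟩
    rw [iteratedDeriv_succ, funext hQ]
    have h2 : HasDerivAt (fun u : ℝ => fS u * Q.eval (fS u))
        ((fS t ^ 2 - fS t) * Q.eval (fS t) +
          fS t * (Q.derivative.eval (fS t) * (fS t ^ 2 - fS t))) t :=
      (fS_hasDeriv t).mul ((Q.hasDerivAt (fS t)).comp t (fS_hasDeriv t))
    rw [h2.deriv]
    simp only [Polynomial.eval_mul, Polynomial.eval_add, Polynomial.eval_sub, Polynomial.eval_X,
      Polynomial.eval_C, Polynomial.eval_one]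
    ring

lemma fS_iter_bound (k : ℕ) : ∃ B : ℝ, 0 ≤ B ∧
    ∀ t : ℝ, ‖iteratedDeriv k fS t‖ ≤ B * Real.exp (-t) := by
  obtain ⟨Q, hQ⟩ := fS_poly k
  set B : ℝ := ∑ i ∈ Finset.range (Q.natDegree + 1), ‖Q.coeff i‖ with hB
  have hBnn : 0 ≤ B := Finset.sum_nonneg fun i _ => norm_nonneg _
  have hBound : ∀ z : ℂ, ‖z‖ ≤ 1 → ‖Q.eval z‖ ≤ B := by
    intro z hz
    rw [Polynomial.eval_eq_sum_range]
    refine (norm_sum_le _ _).trans (Finset.sum_le_sum fun i _ => ?_)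
    rw [norm_mul, norm_pow]
    exact mul_le_of_le_one_right (norm_nonneg _) (pow_le_one₀ (norm_nonneg z) hz)
  refine ⟨B, hBnn, fun t => ?_⟩
  rw [hQ t, norm_mul, mul_comm B _]
  exact mul_le_mul (fS_le_exp t) (hBound _ (fS_le_one t)) (norm_nonneg _) (Real.exp_pos _).le

lemma iter_hasDeriv (k : ℕ) (t : ℝ) :
    HasDerivAt (iteratedDeriv k fS) (iteratedDeriv (k + 1) fS t) t := by
  rw [iteratedDeriv_succ]
  exact (fS_contDiff.differentiable_iteratedDeriv k
    (by exact_mod_cast lt_of_le_of_lt (le_refl _) (by exact_mod_cast lt_top_iff_ne_top.2 (by simp)))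
    t).hasDerivAt

lemma iter_continuous (k : ℕ) : Continuous (iteratedDeriv k fS) :=
  fS_contDiff.continuous_iteratedDeriv k (by exact_mod_cast le_top)

lemma cpow_contOn (c : ℂ) : ContinuousOn (fun t : ℝ => (t : ℂ) ^ c) (Set.Ioi 0) := by
  intro x hx
  have : ContinuousAt (fun z : ℂ => z ^ c) (x : ℂ) :=
    continuousAt_cpow_const (Complex.ofReal_mem_slitPlane.2 hx)
  exact (this.comp Complex.continuous_ofReal.continuousAt).continuousWithinAt

lemma integrable_aux {c : ℂ} (hc : 0 < c.re) (k : ℕ) :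
    IntegrableOn (fun t : ℝ => (t : ℂ) ^ (c - 1) * iteratedDeriv k fS t) (Set.Ioi 0) := by
  obtain ⟨B, hB0, hB⟩ := fS_iter_bound k
  have hmeas : AEStronglyMeasurable (fun t : ℝ => (t : ℂ) ^ (c - 1) * iteratedDeriv k fS t)
      (volume.restrict (Set.Ioi 0)) :=
    ((cpow_contOn (c - 1)).mul (iter_continuous k).continuousOn).aestronglyMeasurable
      measurableSet_Ioi
  have hint : Integrable (fun t : ℝ => B * (Real.exp (-t) * t ^ (c.re - 1)))
      (volume.restrict (Set.Ioi 0)) :=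
    (Real.GammaIntegral_convergent hc).const_mul B
  refine hint.mono' hmeas ?_
  filter_upwards [ae_restrict_mem measurableSet_Ioi] with t ht
  rw [norm_mul, Complex.norm_cpow_eq_rpow_re_of_pos ht, Complex.sub_re,
    Complex.one_re]
  calc t ^ (c.re - 1) * ‖iteratedDeriv k fS t‖
      ≤ t ^ (c.re - 1) * (B * Real.exp (-t)) := by
        exact mul_le_mul_of_nonneg_left (hB t) (Real.rpow_nonneg ht.le _)
    _ = B * (Real.exp (-t) * t ^ (c.re - 1)) := by ring

lemma tendsto_top_aux {c : ℂ} (k : ℕ) :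
    Filter.Tendsto (fun t : ℝ => (t : ℂ) ^ c * iteratedDeriv k fS t) atTop (nhds 0) := by
  obtain ⟨B, hB0, hB⟩ := fS_iter_bound k
  have h0 : Filter.Tendsto (fun t : ℝ => B * (t ^ c.re * Real.exp (-(1 : ℝ) * t))) atTop
      (nhds (B * 0)) :=
    (tendsto_rpow_mul_exp_neg_mul_atTop_nhds_zero c.re 1 one_pos).const_mul B
  rw [mul_zero] at h0
  refine squeeze_zero_norm' ?_ h0
  filter_upwards [eventually_gt_atTop (0 : ℝ)] with t ht
  rw [norm_mul, Complex.norm_cpow_eq_rpow_re_of_pos ht]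
  calc t ^ c.re * ‖iteratedDeriv k fS t‖
      ≤ t ^ c.re * (B * Real.exp (-t)) :=
        mul_le_mul_of_nonneg_left (hB t) (Real.rpow_nonneg ht.le _)
    _ = B * (t ^ c.re * Real.exp (-(1 : ℝ) * t)) := by rw [neg_one_mul]; ring

lemma tendsto_zero_aux {c : ℂ} (hc : 0 < c.re) (k : ℕ) :
    ContinuousWithinAt (fun t : ℝ => (t : ℂ) ^ c * iteratedDeriv k fS t) (Set.Ici 0) 0 := by
  obtain ⟨B, hB0, hB⟩ := fS_iter_bound k
  have hval : ((0 : ℝ) : ℂ) ^ c * iteratedDeriv k fS 0 = 0 := by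
    rw [Complex.ofReal_zero, Complex.zero_cpow (fun h => by simp [h] at hc), zero_mul]
  rw [ContinuousWithinAt, hval]
  have h0 : Filter.Tendsto (fun t : ℝ => B * t ^ c.re) (nhdsWithin 0 (Set.Ici 0)) (nhds (B * 0)) := by
    apply Filter.Tendsto.const_mul
    have : ContinuousWithinAt (fun t : ℝ => t ^ c.re) (Set.Ici 0) 0 :=
      (Real.continuousAt_rpow_const 0 c.re (Or.inr hc.le)).continuousWithinAt
    have h2 : Filter.Tendsto (fun t : ℝ => t ^ c.re) (nhdsWithin 0 (Set.Ici 0))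
        (nhds ((0 : ℝ) ^ c.re)) := this
    rwa [Real.zero_rpow hc.ne'] at h2
  rw [mul_zero] at h0
  refine squeeze_zero_norm' ?_ h0
  filter_upwards [self_mem_nhdsWithin] with t (ht : (0 : ℝ) ≤ t)
  rcases eq_or_lt_of_le ht with rfl | ht'
  · rw [hval, norm_zero]
    positivity
  · rw [norm_mul, Complex.norm_cpow_eq_rpow_re_of_pos ht']
    calc t ^ c.re * ‖iteratedDeriv k fS t‖
        ≤ t ^ c.re * (B * Real.exp (-t)) :=
          mul_le_mul_of_nonneg_left (hB t) (Real.rpow_nonneg ht _)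
      _ ≤ t ^ c.re * (B * 1) := by
          refine mul_le_mul_of_nonneg_left (mul_le_mul_of_nonneg_left ?_ hB0)
            (Real.rpow_nonneg ht _)
          exact Real.exp_le_one_iff.2 (by linarith)
      _ = B * t ^ c.re := by ring

lemma step_lemma {c : ℂ} (hc : 0 < c.re) (k : ℕ) :
    ∫ t in Set.Ioi (0 : ℝ), (t : ℂ) ^ c * iteratedDeriv (k + 1) fS t =
      -c * ∫ t in Set.Ioi (0 : ℝ), (t : ℂ) ^ (c - 1) * iteratedDeriv k fS t := by
  have hc1 : 0 < (c + 1).re := by rw [Complex.add_re, Complex.one_re]; linarith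
  have hint1 : IntegrableOn (fun t : ℝ => (t : ℂ) ^ (c - 1) * iteratedDeriv k fS t)
      (Set.Ioi 0) := integrable_aux hc k
  have hint2 : IntegrableOn (fun t : ℝ => (t : ℂ) ^ c * iteratedDeriv (k + 1) fS t)
      (Set.Ioi 0) := by
    have := integrable_aux hc1 (k + 1)
    simpa using this
  have hderiv : ∀ t ∈ Set.Ioi (0 : ℝ),
      HasDerivAt (fun t : ℝ => (t : ℂ) ^ c * iteratedDeriv k fS t)
        (c * (t : ℂ) ^ (c - 1) * iteratedDeriv k fS t
          + (t : ℂ) ^ c * iteratedDeriv (k + 1) fS t) t := by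
    intro t ht
    have h1 : HasDerivAt (fun t : ℝ => (t : ℂ) ^ c) (c * (t : ℂ) ^ (c - 1)) t := by
      have := ((Complex.hasStrictDerivAt_cpow_const (c := c)
        (Complex.ofReal_mem_slitPlane.2 ht)).hasDerivAt).comp_ofReal (z := t)
      simpa using this
    exact h1.mul (iter_hasDeriv k t)
  have hint' : IntegrableOn (fun t : ℝ => c * (t : ℂ) ^ (c - 1) * iteratedDeriv k fS t
      + (t : ℂ) ^ c * iteratedDeriv (k + 1) fS t) (Set.Ioi 0) := by
    have := (hint1.const_mul c).add hint2
    simp only [mul_assoc] at this ⊢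
    exact this
  have key := integral_Ioi_of_hasDerivAt_of_tendsto (tendsto_zero_aux hc k) hderiv hint'
    (tendsto_top_aux k)
  have hval : ((0 : ℝ) : ℂ) ^ c * iteratedDeriv k fS 0 = 0 := by
    rw [Complex.ofReal_zero, Complex.zero_cpow (fun h => by simp [h] at hc), zero_mul]
  rw [hval, zero_sub, neg_zero] at key
  have hsplit : ∫ t in Set.Ioi (0 : ℝ), (c * (t : ℂ) ^ (c - 1) * iteratedDeriv k fS t
      + (t : ℂ) ^ c * iteratedDeriv (k + 1) fS t) =
      (∫ t in Set.Ioi (0 : ℝ), c * (t : ℂ) ^ (c - 1) * iteratedDeriv k fS t)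
      + ∫ t in Set.Ioi (0 : ℝ), (t : ℂ) ^ c * iteratedDeriv (k + 1) fS t := by
    refine integral_add ?_ hint2
    simpa [mul_assoc] using hint1.const_mul c
  rw [hsplit] at key
  have hpull : ∫ t in Set.Ioi (0 : ℝ), c * (t : ℂ) ^ (c - 1) * iteratedDeriv k fS t =
      c * ∫ t in Set.Ioi (0 : ℝ), (t : ℂ) ^ (c - 1) * iteratedDeriv k fS t := by
    rw [← integral_const_mul]
    simp [mul_assoc]
  rw [hpull] at key
  linear_combination key

lemma sum_ne {s : ℂ} (hs : 0 < s.re) (j : ℕ) : s + (j : ℂ) ≠ 0 := by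
  intro h
  have h2 : (s + (j : ℂ)).re = 0 := by rw [h, Complex.zero_re]
  rw [Complex.add_re, Complex.natCast_re] at h2
  have h3 : (0 : ℝ) ≤ j := Nat.cast_nonneg j
  linarith

lemma main_claim (s : ℂ) (hs : 0 < s.re) (n : ℕ) :
    ∫ t in Set.Ioi (0 : ℝ), (t : ℂ) ^ (s - 1) * iteratedDeriv 0 fS t =
      ((-1 : ℂ) ^ (n + 1) / ∏ j ∈ Finset.range (n + 1), (s + j)) *
        ∫ t in Set.Ioi (0 : ℝ), (t : ℂ) ^ (s + n) * iteratedDeriv (n + 1) fS t := by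
  induction n with
  | zero =>
    have key := step_lemma hs 0
    norm_num at key ⊢
    rw [key]
    have hne : s ≠ 0 := fun h => by simp [h] at hs
    field_simp
  | succ n ih =>
    have hc : 0 < (s + ((n : ℂ) + 1)).re := by
      rw [Complex.add_re, Complex.add_re, Complex.natCast_re, Complex.one_re]
      have : (0 : ℝ) ≤ n := Nat.cast_nonneg n
      linarith
    have key := step_lemma hc (n + 1)
    rw [show s + ((n : ℂ) + 1) - 1 = s + (n : ℂ) from by ring] at key
    rw [Finset.prod_range_succ, ih]
    push_cast
    rw [key]
    have h1 : (∏ j ∈ Finset.range (n + 1), (s + (j : ℂ))) ≠ 0 :=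
      Finset.prod_ne_zero_iff.2 fun j _ => sum_ne hs j
    have h2 : s + ((n : ℂ) + 1) ≠ 0 := by
      have := sum_ne hs (n + 1)
      rwa [show ((n + 1 : ℕ) : ℂ) = (n : ℂ) + 1 from by push_cast; ring] at this
    field_simp
    ring

theorem stmt_15 (s : ℂ) (hs : 0 < s.re) (n : ℕ) :
    ∫ t in Set.Ioi (0 : ℝ), (t : ℂ) ^ (s - 1) / (1 + Real.exp t) =
      ((-1 : ℂ) ^ (n + 1) / ∏ j ∈ Finset.range (n + 1), (s + j)) *
        ∫ t in Set.Ioi (0 : ℝ),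
          (t : ℂ) ^ (s + n) *
            iteratedDeriv (n + 1) (fun u : ℝ => 1 / (1 + (Real.exp u : ℂ))) t := by
  have hfun : (fun t : ℝ => (t : ℂ) ^ (s - 1) / (1 + Real.exp t)) =
      fun t : ℝ => (t : ℂ) ^ (s - 1) * iteratedDeriv 0 fS t := by
    funext t
    rw [iteratedDeriv_zero]
    simp only [fS]
    rw [mul_one_div]
  rw [show (fun u : ℝ => 1 / (1 + (Real.exp u : ℂ))) = fS from rfl, hfun]
  exact main_claim s hs n
end
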